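/- Birthday multiplication theorem: define f : ℕ → ℕ → ℕ by f(0, m) = 0, f(n, 0) = 0, and f(n+1, m+1) = f(n+1, m) + f(n, m+1) + f(n, m) + 1. Then for all finite-born numeric pregames x and y with birthdays g(x) = n and g(y) = m, the birthday of their product is g(x·y) = f(n, m). -/

import Mathlib

universe u

namespace SetTheory

-- Combinatorial game theory was removed from Mathlib; the December 2024 definitions are restated here.
inductive PGame : Type (u + 1)
  | mk : ∀ α β : Type u, (α → PGame) → (β → PGame) → PGame

namespace PGame

noncomputable def leLf (x : PGame.{u}) : PGame.{u} → Prop × Prop :=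
  PGame.rec (motive := fun _ => PGame.{u} → Prop × Prop)
    (fun _ _ _ _ IHl IHr y =>
      PGame.rec (motive := fun _ => Prop × Prop)
        (fun yl yr yL yR jl jr =>
          ((∀ i, (IHl i (mk yl yr yL yR)).2) ∧ ∀ j, (jr j).2,
            (∃ i, (jl i).1) ∨ ∃ j, (IHr j (mk yl yr yL yR)).1)) y) x

instance : LE PGame.{u} :=
  ⟨fun x y => (leLf x y).1⟩

instance : LT PGame.{u} :=
  ⟨fun x y => x ≤ y ∧ ¬y ≤ x⟩

def Numeric : PGame.{u} → Prop
  | ⟨_, _, L, R⟩ => (∀ i j, L i < R j) ∧ (∀ i, Numeric (L i)) ∧ ∀ j, Numeric (R j)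

def neg : PGame.{u} → PGame.{u}
  | ⟨l, r, L, R⟩ => ⟨r, l, fun i => neg (R i), fun i => neg (L i)⟩

instance : Neg PGame.{u} :=
  ⟨neg⟩

noncomputable def add (x : PGame.{u}) : PGame.{u} → PGame.{u} :=
  PGame.rec (motive := fun _ => PGame.{u} → PGame.{u})
    (fun xl xr _ _ IHxl IHxr y =>
      PGame.rec (motive := fun _ => PGame.{u})
        (fun yl yr yL yR IHyl IHyr =>
          mk (xl ⊕ yl) (xr ⊕ yr) (Sum.elim (fun i => IHxl i (mk yl yr yL yR)) IHyl)
            (Sum.elim (fun i => IHxr i (mk yl yr yL yR)) IHyr)) y) x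

noncomputable instance : Add PGame.{u} :=
  ⟨add⟩

noncomputable instance : Sub PGame.{u} :=
  ⟨fun x y => x + -y⟩

noncomputable def mul (x : PGame.{u}) : PGame.{u} → PGame.{u} :=
  PGame.rec (motive := fun _ => PGame.{u} → PGame.{u})
    (fun xl xr _ _ IHxl IHxr y =>
      PGame.rec (motive := fun _ => PGame.{u})
        (fun yl yr yL yR IHyl IHyr =>
          mk ((xl × yl) ⊕ (xr × yr)) ((xl × yr) ⊕ (xr × yl))
            (Sum.elim
              (fun p => IHxl p.1 (mk yl yr yL yR) + IHyl p.2 - IHxl p.1 (yL p.2))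
              (fun p => IHxr p.1 (mk yl yr yL yR) + IHyr p.2 - IHxr p.1 (yR p.2)))
            (Sum.elim
              (fun p => IHxl p.1 (mk yl yr yL yR) + IHyr p.2 - IHxl p.1 (yR p.2))
              (fun p => IHxr p.1 (mk yl yr yL yR) + IHyl p.2 - IHxr p.1 (yL p.2)))) y) x

noncomputable instance : Mul PGame.{u} :=
  ⟨mul⟩

noncomputable def birthday : PGame.{u} → Ordinal.{u}
  | ⟨_, _, xL, xR⟩ =>
    max (Ordinal.lsub.{u, u} fun i => birthday (xL i)) (Ordinal.lsub.{u, u} fun i => birthday (xR i))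

end PGame

end SetTheory

open SetTheory PGame Ordinal

/-- The recurrence governing birthdays of surreal products. -/
def birthdayMulFun : ℕ → ℕ → ℕ
  | 0, _ => 0
  | _ + 1, 0 => 0
  | n + 1, m + 1 =>
      birthdayMulFun (n + 1) m + birthdayMulFun n (m + 1) + birthdayMulFun n m + 1

namespace SetTheory.PGame

def LeftMoves : PGame.{u} → Type u
  | mk l _ _ _ => l

def RightMoves : PGame.{u} → Type u
  | mk _ r _ _ => r

def moveLeft : ∀ g : PGame.{u}, LeftMoves g → PGame.{u}
  | mk _ _ L _ => L

def moveRight : ∀ g : PGame.{u}, RightMoves g → PGame.{u}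
  | mk _ _ _ R => R

theorem birthday_def (x : PGame.{u}) : x.birthday =
    max (Ordinal.lsub.{u, u} fun i => (x.moveLeft i).birthday)
      (Ordinal.lsub.{u, u} fun i => (x.moveRight i).birthday) := by
  cases x; rfl

theorem birthday_moveLeft_lt {x : PGame.{u}} (i : x.LeftMoves) :
    (x.moveLeft i).birthday < x.birthday := by
  rw [birthday_def x]; exact lt_max_of_lt_left (Ordinal.lt_lsub _ i)

theorem birthday_moveRight_lt {x : PGame.{u}} (i : x.RightMoves) :
    (x.moveRight i).birthday < x.birthday := by
  rw [birthday_def x]; exact lt_max_of_lt_right (Ordinal.lt_lsub _ i)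

theorem lt_birthday_iff {x : PGame.{u}} {o : Ordinal} :
    o < x.birthday ↔
      (∃ i : x.LeftMoves, o ≤ (x.moveLeft i).birthday) ∨
        ∃ i : x.RightMoves, o ≤ (x.moveRight i).birthday := by
  constructor
  · rw [birthday_def x]
    intro h
    rcases lt_max_iff.1 h with h' | h'
    · left
      rwa [Ordinal.lt_lsub_iff] at h'
    · right
      rwa [Ordinal.lt_lsub_iff] at h'
  · rintro (⟨i, hi⟩ | ⟨i, hi⟩)
    · exact hi.trans_lt (birthday_moveLeft_lt i)
    · exact hi.trans_lt (birthday_moveRight_lt i)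

theorem birthday_eq_zero {x : PGame.{u}} :
    birthday x = 0 ↔ IsEmpty x.LeftMoves ∧ IsEmpty x.RightMoves := by
  rw [birthday_def x, _root_.max_eq_zero, Ordinal.lsub_eq_zero_iff, Ordinal.lsub_eq_zero_iff]

theorem leftMoves_mul : ∀ x y : PGame.{u},
    (x * y).LeftMoves = ((x.LeftMoves × y.LeftMoves) ⊕ (x.RightMoves × y.RightMoves))
  | ⟨_, _, _, _⟩, ⟨_, _, _, _⟩ => rfl

theorem rightMoves_mul : ∀ x y : PGame.{u},
    (x * y).RightMoves = ((x.LeftMoves × y.RightMoves) ⊕ (x.RightMoves × y.LeftMoves))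
  | ⟨_, _, _, _⟩, ⟨_, _, _, _⟩ => rfl

noncomputable def toLeftMovesMul {x y : PGame.{u}} :
    (x.LeftMoves × y.LeftMoves) ⊕ (x.RightMoves × y.RightMoves) ≃ (x * y).LeftMoves :=
  Equiv.cast (leftMoves_mul x y).symm

noncomputable def toRightMovesMul {x y : PGame.{u}} :
    (x.LeftMoves × y.RightMoves) ⊕ (x.RightMoves × y.LeftMoves) ≃ (x * y).RightMoves :=
  Equiv.cast (rightMoves_mul x y).symm

theorem mul_moveLeft_inl {x y : PGame.{u}} {i j} :
    (x * y).moveLeft (toLeftMovesMul (Sum.inl (i, j))) =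
      x.moveLeft i * y + x * y.moveLeft j - x.moveLeft i * y.moveLeft j := by
  cases x; cases y; rfl

theorem mul_moveLeft_inr {x y : PGame.{u}} {i j} :
    (x * y).moveLeft (toLeftMovesMul (Sum.inr (i, j))) =
      x.moveRight i * y + x * y.moveRight j - x.moveRight i * y.moveRight j := by
  cases x; cases y; rfl

theorem mul_moveRight_inl {x y : PGame.{u}} {i j} :
    (x * y).moveRight (toRightMovesMul (Sum.inl (i, j))) =
      x.moveLeft i * y + x * y.moveRight j - x.moveLeft i * y.moveRight j := by
  cases x; cases y; rfl

theorem mul_moveRight_inr {x y : PGame.{u}} {i j} :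
    (x * y).moveRight (toRightMovesMul (Sum.inr (i, j))) =
      x.moveRight i * y + x * y.moveLeft j - x.moveRight i * y.moveLeft j := by
  cases x; cases y; rfl

theorem leftMoves_mul_cases {x y : PGame.{u}} (k) {P : (x * y).LeftMoves → Prop}
    (hl : ∀ ix iy, P <| toLeftMovesMul (Sum.inl ⟨ix, iy⟩))
    (hr : ∀ jx jy, P <| toLeftMovesMul (Sum.inr ⟨jx, jy⟩)) : P k := by
  rw [← toLeftMovesMul.apply_symm_apply k]
  rcases toLeftMovesMul.symm k with (⟨ix, iy⟩ | ⟨jx, jy⟩)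
  · apply hl
  · apply hr

theorem rightMoves_mul_cases {x y : PGame.{u}} (k) {P : (x * y).RightMoves → Prop}
    (hl : ∀ ix jy, P <| toRightMovesMul (Sum.inl ⟨ix, jy⟩))
    (hr : ∀ jx iy, P <| toRightMovesMul (Sum.inr ⟨jx, iy⟩)) : P k := by
  rw [← toRightMovesMul.apply_symm_apply k]
  rcases toRightMovesMul.symm k with (⟨ix, iy⟩ | ⟨jx, jy⟩)
  · apply hl
  · apply hr

theorem birthday_neg : ∀ x : PGame.{u}, (-x).birthday = x.birthday
  | mk xl xr xL xR => by
    have hL : ∀ i, (-(xL i)).birthday = (xL i).birthday := fun i => birthday_neg (xL i)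
    have hR : ∀ j, (-(xR j)).birthday = (xR j).birthday := fun j => birthday_neg (xR j)
    show birthday (mk xr xl (fun j => -(xR j)) (fun i => -(xL i))) = birthday (mk xl xr xL xR)
    rw [birthday, birthday]
    simp only [hL, hR]
    exact max_comm _ _

theorem moveLeft_lt_nat {x : PGame.{u}} {N : ℕ} (h : x.birthday = (N : Ordinal))
    (i : x.LeftMoves) : ∃ k < N, (x.moveLeft i).birthday = (k : Ordinal) := by
  have h' : (x.moveLeft i).birthday < (N : Ordinal) := by rw [← h]; exact birthday_moveLeft_lt i
  obtain ⟨k, hk⟩ := Ordinal.lt_omega0.1 (h'.trans (Ordinal.nat_lt_omega0 N))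
  rw [hk] at h'
  exact ⟨k, by exact_mod_cast h', hk⟩

theorem moveRight_lt_nat {x : PGame.{u}} {N : ℕ} (h : x.birthday = (N : Ordinal))
    (i : x.RightMoves) : ∃ k < N, (x.moveRight i).birthday = (k : Ordinal) := by
  have h' : (x.moveRight i).birthday < (N : Ordinal) := by rw [← h]; exact birthday_moveRight_lt i
  obtain ⟨k, hk⟩ := Ordinal.lt_omega0.1 (h'.trans (Ordinal.nat_lt_omega0 N))
  rw [hk] at h'
  exact ⟨k, by exact_mod_cast h', hk⟩

theorem exists_option_aux (x : PGame.{u}) (n : ℕ) (h : x.birthday = ((n + 1 : ℕ) : Ordinal)) :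
    (∃ i, (x.moveLeft i).birthday = (n : Ordinal)) ∨
      ∃ j, (x.moveRight j).birthday = (n : Ordinal) := by
  have hlt : (n : Ordinal) < x.birthday := by
    rw [h]; exact_mod_cast Nat.lt_succ_self n
  rcases lt_birthday_iff.1 hlt with ⟨i, hi⟩ | ⟨i, hi⟩
  · left
    refine ⟨i, le_antisymm ?_ hi⟩
    obtain ⟨k, hk, hk'⟩ := moveLeft_lt_nat h i
    rw [hk']; exact_mod_cast Nat.lt_succ_iff.mp hk
  · right
    refine ⟨i, le_antisymm ?_ hi⟩
    obtain ⟨k, hk, hk'⟩ := moveRight_lt_nat h i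
    rw [hk']; exact_mod_cast Nat.lt_succ_iff.mp hk

theorem birthday_eq_nat {x : PGame.{u}} {N : ℕ}
    (hL : ∀ i, ∃ k < N, (x.moveLeft i).birthday = (k : Ordinal))
    (hR : ∀ j, ∃ k < N, (x.moveRight j).birthday = (k : Ordinal))
    (hex : ∀ n, N = n + 1 → (∃ i, (x.moveLeft i).birthday = (n : Ordinal)) ∨
      ∃ j, (x.moveRight j).birthday = (n : Ordinal)) :
    x.birthday = (N : Ordinal) := by
  apply le_antisymm
  · rw [birthday_def x]
    apply max_le
    · apply Ordinal.lsub_le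
      intro i
      obtain ⟨k, hk, h⟩ := hL i
      rw [h]; exact_mod_cast hk
    · apply Ordinal.lsub_le
      intro i
      obtain ⟨k, hk, h⟩ := hR i
      rw [h]; exact_mod_cast hk
  · cases N with
    | zero => rw [Nat.cast_zero]; exact zero_le
    | succ n =>
      have hlt : (n : Ordinal) < x.birthday := by
        rcases hex n rfl with ⟨i, hi⟩ | ⟨j, hj⟩
        · rw [← hi]; exact birthday_moveLeft_lt i
        · rw [← hj]; exact birthday_moveRight_lt j
      rw [Nat.cast_succ, Ordinal.add_one_eq_succ]
      exact Order.succ_le_of_lt hlt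

theorem mk_add_mk (xl xr : Type u) (xL : xl → PGame.{u}) (xR : xr → PGame.{u})
    (yl yr : Type u) (yL : yl → PGame.{u}) (yR : yr → PGame.{u}) :
    mk xl xr xL xR + mk yl yr yL yR = mk (xl ⊕ yl) (xr ⊕ yr)
      (Sum.elim (fun i => xL i + mk yl yr yL yR) (fun j => mk xl xr xL xR + yL j))
      (Sum.elim (fun i => xR i + mk yl yr yL yR) (fun j => mk xl xr xL xR + yR j)) := rfl

theorem birthday_add_nat : ∀ s p q : ℕ, p + q < s → ∀ x y : PGame.{u},
    x.birthday = (p : Ordinal) → y.birthday = (q : Ordinal) →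
    (x + y).birthday = ((p + q : ℕ) : Ordinal) := by
  intro s
  induction s with
  | zero => intro p q h; exact absurd h (Nat.not_lt_zero _)
  | succ s ih =>
    intro p q h x y hx hy
    rcases x with ⟨xl, xr, xL, xR⟩
    rcases y with ⟨yl, yr, yL, yR⟩
    rw [mk_add_mk]
    apply birthday_eq_nat
    · rintro (i | j)
      · obtain ⟨k, hk, hbk⟩ := moveLeft_lt_nat hx i
        exact ⟨k + q, by omega, ih k q (by omega) _ _ hbk hy⟩
      · obtain ⟨k, hk, hbk⟩ := moveLeft_lt_nat hy j
        exact ⟨p + k, by omega, ih p k (by omega) _ _ hx hbk⟩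
    · rintro (i | j)
      · obtain ⟨k, hk, hbk⟩ := moveRight_lt_nat hx i
        exact ⟨k + q, by omega, ih k q (by omega) _ _ hbk hy⟩
      · obtain ⟨k, hk, hbk⟩ := moveRight_lt_nat hy j
        exact ⟨p + k, by omega, ih p k (by omega) _ _ hx hbk⟩
    · intro n hn
      rcases Nat.eq_zero_or_pos p with hp | hp
      · subst hp
        obtain ⟨q', rfl⟩ : ∃ q', q = q' + 1 := ⟨q - 1, by omega⟩
        rcases exists_option_aux _ q' hy with ⟨j, hj⟩ | ⟨j, hj⟩
        · left
          exact ⟨Sum.inr j, (ih 0 q' (by omega) _ _ hx hj).trans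
            (congrArg (Nat.cast : ℕ → Ordinal) (show 0 + q' = n by omega))⟩
        · right
          exact ⟨Sum.inr j, (ih 0 q' (by omega) _ _ hx hj).trans
            (congrArg (Nat.cast : ℕ → Ordinal) (show 0 + q' = n by omega))⟩
      · obtain ⟨p', rfl⟩ : ∃ p', p = p' + 1 := ⟨p - 1, by omega⟩
        rcases exists_option_aux _ p' hx with ⟨i, hi⟩ | ⟨i, hi⟩
        · left
          exact ⟨Sum.inl i, (ih p' q (by omega) _ _ hi hy).trans
            (congrArg (Nat.cast : ℕ → Ordinal) (show p' + q = n by omega))⟩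
        · right
          exact ⟨Sum.inl i, (ih p' q (by omega) _ _ hi hy).trans
            (congrArg (Nat.cast : ℕ → Ordinal) (show p' + q = n by omega))⟩

end SetTheory.PGame

lemma bmf_zero_left (m : ℕ) : birthdayMulFun 0 m = 0 := by simp [birthdayMulFun]

lemma bmf_zero_right : ∀ n, birthdayMulFun n 0 = 0
  | 0 => by simp [birthdayMulFun]
  | _ + 1 => by simp [birthdayMulFun]

lemma bmf_succ_succ (n m : ℕ) : birthdayMulFun (n + 1) (m + 1) =
    birthdayMulFun (n + 1) m + birthdayMulFun n (m + 1) + birthdayMulFun n m + 1 := by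
  simp [birthdayMulFun]

lemma bmf_le_succ_right : ∀ n m, birthdayMulFun n m ≤ birthdayMulFun n (m + 1)
  | 0, m => by rw [bmf_zero_left, bmf_zero_left]
  | _ + 1, 0 => by rw [bmf_zero_right]; exact Nat.zero_le _
  | n + 1, m + 1 => by rw [bmf_succ_succ n (m + 1)]; omega

lemma bmf_le_succ_left : ∀ n m, birthdayMulFun n m ≤ birthdayMulFun (n + 1) m
  | n, 0 => by rw [bmf_zero_right, bmf_zero_right]
  | 0, m + 1 => by rw [bmf_zero_left]; exact Nat.zero_le _
  | n + 1, m + 1 => by rw [bmf_succ_succ (n + 1) m]; omega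

lemma bmf_mono : ∀ {n n' m m' : ℕ}, n ≤ n' → m ≤ m' →
    birthdayMulFun n m ≤ birthdayMulFun n' m' := by
  have hr : ∀ n m m', m ≤ m' → birthdayMulFun n m ≤ birthdayMulFun n m' := by
    intro n m m' h
    induction h with
    | refl => exact le_rfl
    | step _ ih => exact ih.trans (bmf_le_succ_right _ _)
  intro n n' m m' h1 h2
  refine le_trans ?_ (hr n' m m' h2)
  induction h1 with
  | refl => exact le_rfl
  | step _ ih => exact ih.trans (bmf_le_succ_left _ _)

lemma opt_birthday (a b c : PGame) (p q r : ℕ)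
    (ha : a.birthday = (p : Ordinal)) (hb : b.birthday = (q : Ordinal))
    (hc : c.birthday = (r : Ordinal)) :
    (a + b - c).birthday = ((p + q + r : ℕ) : Ordinal) := by
  show ((a + b) + -c).birthday = _
  exact birthday_add_nat (p + q + r + 1) (p + q) r (by omega) (a + b) (-c)
    (birthday_add_nat (p + q + 1) p q (by omega) a b ha hb) (by rw [birthday_neg, hc])

lemma lt_nat_succ {o : Ordinal} {n : ℕ} (h : o < ((n + 1 : ℕ) : Ordinal)) :
    ∃ k ≤ n, o = (k : Ordinal) := by
  obtain ⟨k, rfl⟩ := Ordinal.lt_omega0.1 (h.trans (Ordinal.nat_lt_omega0 (n + 1)))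
  have : k < n + 1 := by exact_mod_cast h
  exact ⟨k, by omega, rfl⟩

lemma exists_option_birthday (x : PGame) (n : ℕ)
    (h : x.birthday = ((n + 1 : ℕ) : Ordinal)) :
    (∃ i, (x.moveLeft i).birthday = (n : Ordinal)) ∨
      ∃ j, (x.moveRight j).birthday = (n : Ordinal) := by
  have hlt : (n : Ordinal) < x.birthday := by
    rw [h]; exact_mod_cast Nat.lt_succ_self n
  have hub : ∀ o : Ordinal, o < x.birthday → o ≤ (n : Ordinal) := by
    intro o ho
    rw [h] at ho
    obtain ⟨k, hk, rfl⟩ := lt_nat_succ ho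
    exact_mod_cast hk
  rcases PGame.lt_birthday_iff.1 hlt with ⟨i, hi⟩ | ⟨i, hi⟩
  · exact Or.inl ⟨i, le_antisymm (hub _ (PGame.birthday_moveLeft_lt i)) hi⟩
  · exact Or.inr ⟨i, le_antisymm (hub _ (PGame.birthday_moveRight_lt i)) hi⟩

lemma option_birthday_lt {n m k l : ℕ} (hk : k ≤ n) (hl : l ≤ m)
    (a b c : PGame)
    (ha : a.birthday = (birthdayMulFun k (m + 1) : Ordinal))
    (hb : b.birthday = (birthdayMulFun (n + 1) l : Ordinal))
    (hc : c.birthday = (birthdayMulFun k l : Ordinal)) :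
    (a + b - c).birthday < (birthdayMulFun (n + 1) (m + 1) : Ordinal) := by
  rw [opt_birthday a b c _ _ _ ha hb hc]
  have h1 := bmf_mono hk (le_refl (m + 1))
  have h2 := bmf_mono (le_refl (n + 1)) hl
  have h3 := bmf_mono hk hl
  have h4 := bmf_succ_succ n m
  exact_mod_cast (by omega :
    birthdayMulFun k (m + 1) + birthdayMulFun (n + 1) l + birthdayMulFun k l <
      birthdayMulFun (n + 1) (m + 1))

lemma mul_birthday_zero_left (x y : PGame) (h : x.birthday = 0) : (x * y).birthday = 0 := by
  obtain ⟨h1, h2⟩ := PGame.birthday_eq_zero.1 h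
  rcases x with ⟨xl, xr, xL, xR⟩
  rcases y with ⟨yl, yr, yL, yR⟩
  rw [PGame.birthday_eq_zero]
  constructor
  · exact ⟨fun i => match i with
      | Sum.inl (a, _) => h1.elim a
      | Sum.inr (a, _) => h2.elim a⟩
  · exact ⟨fun i => match i with
      | Sum.inl (a, _) => h1.elim a
      | Sum.inr (a, _) => h2.elim a⟩

lemma mul_birthday_zero_right (x y : PGame) (h : y.birthday = 0) : (x * y).birthday = 0 := by
  obtain ⟨h1, h2⟩ := PGame.birthday_eq_zero.1 h
  rcases x with ⟨xl, xr, xL, xR⟩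
  rcases y with ⟨yl, yr, yL, yR⟩
  rw [PGame.birthday_eq_zero]
  constructor
  · exact ⟨fun i => match i with
      | Sum.inl (_, a) => h1.elim a
      | Sum.inr (_, a) => h2.elim a⟩
  · exact ⟨fun i => match i with
      | Sum.inl (_, a) => h2.elim a
      | Sum.inr (_, a) => h1.elim a⟩

lemma birthday_mul_key : ∀ (s n m : ℕ), n + m ≤ s → ∀ (x y : PGame),
    x.birthday = (n : Ordinal) → y.birthday = (m : Ordinal) →
    (x * y).birthday = (birthdayMulFun n m : Ordinal) := by
  intro s
  induction s with
  | zero =>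
    intro n m hs x y hxn hym
    have hn : n = 0 := by omega
    subst hn
    rw [bmf_zero_left, Nat.cast_zero]
    exact mul_birthday_zero_left x y (by rw [hxn]; simp)
  | succ s ih =>
    intro n m hs x y hxn hym
    match n, m with
    | 0, m =>
      rw [bmf_zero_left, Nat.cast_zero]
      exact mul_birthday_zero_left x y (by rw [hxn]; simp)
    | n + 1, 0 =>
      rw [bmf_zero_right, Nat.cast_zero]
      exact mul_birthday_zero_right x y (by rw [hym]; simp)
    | n + 1, m + 1 =>
      have hxlt : ∀ i, ∃ k ≤ n, (x.moveLeft i).birthday = (k : Ordinal) := fun i =>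
        lt_nat_succ (hxn ▸ PGame.birthday_moveLeft_lt i)
      have hxrt : ∀ i, ∃ k ≤ n, (x.moveRight i).birthday = (k : Ordinal) := fun i =>
        lt_nat_succ (hxn ▸ PGame.birthday_moveRight_lt i)
      have hylt : ∀ j, ∃ l ≤ m, (y.moveLeft j).birthday = (l : Ordinal) := fun j =>
        lt_nat_succ (hym ▸ PGame.birthday_moveLeft_lt j)
      have hyrt : ∀ j, ∃ l ≤ m, (y.moveRight j).birthday = (l : Ordinal) := fun j =>
        lt_nat_succ (hym ▸ PGame.birthday_moveRight_lt j)
      apply le_antisymm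
      · rw [PGame.birthday_def]
        apply max_le
        · apply Ordinal.lsub_le
          intro i
          refine PGame.leftMoves_mul_cases (P := fun i => ((x * y).moveLeft i).birthday <
            (birthdayMulFun (n + 1) (m + 1) : Ordinal)) i ?_ ?_
          · intro ix iy
            obtain ⟨k, hk, hbk⟩ := hxlt ix
            obtain ⟨l, hl, hbl⟩ := hylt iy
            rw [PGame.mul_moveLeft_inl]
            exact option_birthday_lt hk hl _ _ _
              (ih k (m + 1) (by omega) _ y hbk hym)
              (ih (n + 1) l (by omega) x _ hxn hbl)
              (ih k l (by omega) _ _ hbk hbl)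
          · intro jx jy
            obtain ⟨k, hk, hbk⟩ := hxrt jx
            obtain ⟨l, hl, hbl⟩ := hyrt jy
            rw [PGame.mul_moveLeft_inr]
            exact option_birthday_lt hk hl _ _ _
              (ih k (m + 1) (by omega) _ y hbk hym)
              (ih (n + 1) l (by omega) x _ hxn hbl)
              (ih k l (by omega) _ _ hbk hbl)
        · apply Ordinal.lsub_le
          intro i
          refine PGame.rightMoves_mul_cases (P := fun i => ((x * y).moveRight i).birthday <
            (birthdayMulFun (n + 1) (m + 1) : Ordinal)) i ?_ ?_
          · intro ix jy
            obtain ⟨k, hk, hbk⟩ := hxlt ix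
            obtain ⟨l, hl, hbl⟩ := hyrt jy
            rw [PGame.mul_moveRight_inl]
            exact option_birthday_lt hk hl _ _ _
              (ih k (m + 1) (by omega) _ y hbk hym)
              (ih (n + 1) l (by omega) x _ hxn hbl)
              (ih k l (by omega) _ _ hbk hbl)
          · intro jx iy
            obtain ⟨k, hk, hbk⟩ := hxrt jx
            obtain ⟨l, hl, hbl⟩ := hylt iy
            rw [PGame.mul_moveRight_inr]
            exact option_birthday_lt hk hl _ _ _
              (ih k (m + 1) (by omega) _ y hbk hym)
              (ih (n + 1) l (by omega) x _ hxn hbl)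
              (ih k l (by omega) _ _ hbk hbl)
      · -- lower bound
        set B : ℕ := birthdayMulFun (n + 1) m + birthdayMulFun n (m + 1) + birthdayMulFun n m
          with hB
        have hBlt : ((B : ℕ) : Ordinal) < (x * y).birthday := by
          have hle : ((B : ℕ) : Ordinal) =
              ((birthdayMulFun n (m + 1) + birthdayMulFun (n + 1) m + birthdayMulFun n m : ℕ) :
                Ordinal) := by
            norm_cast; rw [hB]; ring
          rcases exists_option_birthday x n hxn with ⟨i, hi⟩ | ⟨i, hi⟩ <;>
            rcases exists_option_birthday y m hym with ⟨j, hj⟩ | ⟨j, hj⟩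
          · refine PGame.lt_birthday_iff.2 (Or.inl ⟨toLeftMovesMul (Sum.inl (i, j)), ?_⟩)
            rw [PGame.mul_moveLeft_inl, opt_birthday _ _ _ _ _ _
              (ih n (m + 1) (by omega) _ y hi hym)
              (ih (n + 1) m (by omega) x _ hxn hj)
              (ih n m (by omega) _ _ hi hj)]
            exact le_of_eq hle
          · refine PGame.lt_birthday_iff.2 (Or.inr ⟨toRightMovesMul (Sum.inl (i, j)), ?_⟩)
            rw [PGame.mul_moveRight_inl, opt_birthday _ _ _ _ _ _
              (ih n (m + 1) (by omega) _ y hi hym)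
              (ih (n + 1) m (by omega) x _ hxn hj)
              (ih n m (by omega) _ _ hi hj)]
            exact le_of_eq hle
          · refine PGame.lt_birthday_iff.2 (Or.inr ⟨toRightMovesMul (Sum.inr (i, j)), ?_⟩)
            rw [PGame.mul_moveRight_inr, opt_birthday _ _ _ _ _ _
              (ih n (m + 1) (by omega) _ y hi hym)
              (ih (n + 1) m (by omega) x _ hxn hj)
              (ih n m (by omega) _ _ hi hj)]
            exact le_of_eq hle
          · refine PGame.lt_birthday_iff.2 (Or.inl ⟨toLeftMovesMul (Sum.inr (i, j)), ?_⟩)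
            rw [PGame.mul_moveLeft_inr, opt_birthday _ _ _ _ _ _
              (ih n (m + 1) (by omega) _ y hi hym)
              (ih (n + 1) m (by omega) x _ hxn hj)
              (ih n m (by omega) _ _ hi hj)]
            exact le_of_eq hle
        have heq : ((birthdayMulFun (n + 1) (m + 1) : ℕ) : Ordinal) = ((B : ℕ) : Ordinal) + 1 := by
          rw [bmf_succ_succ, ← hB]; push_cast; rfl
        rw [heq, Ordinal.add_one_eq_succ]
        exact Order.succ_le_of_lt hBlt

theorem birthday_mul (x y : PGame) (hx : x.Numeric) (hy : y.Numeric)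
    (n m : ℕ) (hxn : x.birthday = (n : Ordinal)) (hym : y.birthday = (m : Ordinal)) :
    (x * y).birthday = (birthdayMulFun n m : Ordinal) :=
  birthday_mul_key (n + m) n m le_rfl x y hxn hym
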